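/- Under the penalized distance D of the previous setting, any tour of the columns of A' whose induced permutation makes every C_k consecutive (k=1,...,q) and that starts/ends at the zero column has length at most 2q(2p+1) + 2p, while any tour whose induced permutation fails to make some C_k consecutive has length at least 2(q+1)(2p+1). -/

import Mathlib

open Finset

/-- Extend a row of length `n` by zeros to an `ℕ`-indexed row. -/
def rowExt (n : ℕ) (r : Fin n → Bool) : ℕ → Bool :=
  fun j => if h : j < n then r ⟨j, h⟩ else false

/-- The number of maximal blocks of consecutive ones in a row. -/
def cons1Row (n : ℕ) (r : Fin n → Bool) : ℕ :=
  ((Finset.range n).filter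
    (fun j => rowExt n r j = true ∧ (j = 0 ∨ rowExt n r (j - 1) = false))).card

/-- The total number of maximal blocks of consecutive ones in a binary matrix. -/
def cons1 {m n : ℕ} (A : Fin m → Fin n → Bool) : ℕ :=
  ∑ i, cons1Row n (A i)

/-- Append a column of zeros to the right of a binary matrix. -/
def appendZero {m n : ℕ} (A : Fin m → Fin n → Bool) : Fin m → Fin (n + 1) → Bool :=
  fun i j => if h : (j : ℕ) < n then A i ⟨j, h⟩ else false

/-- Hamming distance between two columns of a binary matrix. -/
def colHam {m N : ℕ} (B : Fin m → Fin N → Bool) (a b : Fin N) : ℕ :=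
  hammingDist (fun i => B i a) (fun i => B i b)

/-- The set of columns C occupies a contiguous interval of positions in π(A). -/
def consecIn {n : ℕ} (π : Equiv.Perm (Fin n)) (C : Finset (Fin n)) : Prop :=
  ∃ a : ℕ, ∀ j : Fin n, π j ∈ C ↔ a ≤ (j : ℕ) ∧ (j : ℕ) < a + C.card

/-- The penalized distance on the columns of A' (A with a zero column appended). -/
def pDist {m n : ℕ} (A : Fin m → Fin n → Bool) (p q : ℕ) (C : Fin q → Finset (Fin n))
    (a b : Fin (n + 1)) : ℕ :=
  colHam (appendZero A) a b +
    (2 * p + 1) *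
      ∑ k, (if (a ∈ (C k).image Fin.castSucc ↔ b ∈ (C k).image Fin.castSucc) then 0 else 1)

/-- a tour whose induced permutation makes every C_k consecutive has
length at most 2q(2p+1) + 2p, while a tour whose induced permutation fails to make
some C_k consecutive has length at least 2(q+1)(2p+1). -/

lemma constOfNoCross (H : ℕ → Bool) (u : ℕ) :
    ∀ v, u ≤ v → (∀ j, u ≤ j → j < v → H j = H (j + 1)) → H u = H v := by
  intro v
  induction v with
  | zero => intro h _; rw [Nat.le_zero.mp h]
  | succ v ih =>
    intro huv hall
    rcases Nat.lt_or_ge u (v + 1) with h | h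
    · have huv' : u ≤ v := by omega
      rw [ih huv' (fun j h1 h2 => hall j h1 (by omega))]
      exact hall v huv' (by omega)
    · have : u = v + 1 := by omega
      rw [this]

lemma crossExists (H : ℕ → Bool) (u v : ℕ) (huv : u < v) (hne : H u ≠ H v) :
    ∃ j, u ≤ j ∧ j < v ∧ H j ≠ H (j + 1) := by
  by_contra hc
  push_neg at hc
  exact hne (constOfNoCross H u v huv.le (fun j h1 h2 => hc j h1 h2))

/-- lower bound 2 -/
lemma twoLeCross (n : ℕ) (H : ℕ → Bool) (h0 : H 0 = false) (hw : H (n + 1) = false)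
    (i : ℕ) (hi : i ≤ n) (hti : H i = true) :
    2 ≤ ((range (n + 1)).filter (fun t => H t ≠ H (t + 1))).card := by
  have hipos : 0 < i := by
    rcases Nat.eq_zero_or_pos i with h | h
    · rw [h, h0] at hti; exact absurd hti (by simp)
    · exact h
  obtain ⟨j1, hj1a, hj1b, hj1c⟩ := crossExists H 0 i hipos (by simp [h0, hti])
  obtain ⟨j2, hj2a, hj2b, hj2c⟩ := crossExists H i (n + 1) (by omega) (by simp [hw, hti])
  refine Finset.one_lt_card.mpr ⟨j1, ?_, j2, ?_, by omega⟩
  · simp only [mem_filter, mem_range]; exact ⟨by omega, hj1c⟩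
  · simp only [mem_filter, mem_range]; exact ⟨by omega, hj2c⟩

/-- lower bound 4 -/
lemma fourLeCross (n : ℕ) (H : ℕ → Bool) (h0 : H 0 = false) (hw : H (n + 1) = false)
    (i₁ i₂ i₃ : ℕ) (h12 : i₁ < i₂) (h23 : i₂ < i₃) (h3n : i₃ ≤ n)
    (ht1 : H i₁ = true) (ht2 : H i₂ = false) (ht3 : H i₃ = true) :
    4 ≤ ((range (n + 1)).filter (fun t => H t ≠ H (t + 1))).card := by
  have hi1 : 0 < i₁ := by
    rcases Nat.eq_zero_or_pos i₁ with h | h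
    · rw [h, h0] at ht1; exact absurd ht1 (by simp)
    · exact h
  obtain ⟨a, ha1, ha2, ha3⟩ := crossExists H 0 i₁ hi1 (by simp [h0, ht1])
  obtain ⟨b, hb1, hb2, hb3⟩ := crossExists H i₁ i₂ h12 (by simp [ht1, ht2])
  obtain ⟨c, hc1, hc2, hc3⟩ := crossExists H i₂ i₃ h23 (by simp [ht2, ht3])
  obtain ⟨d, hd1, hd2, hd3⟩ := crossExists H i₃ (n + 1) (by omega) (by simp [ht3, hw])
  have hsub : ({a, b, c, d} : Finset ℕ) ⊆ (range (n + 1)).filter (fun t => H t ≠ H (t + 1)) := by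
    intro x hx
    simp only [mem_insert, mem_singleton] at hx
    simp only [mem_filter, mem_range]
    rcases hx with rfl | rfl | rfl | rfl
    · exact ⟨by omega, ha3⟩
    · exact ⟨by omega, hb3⟩
    · exact ⟨by omega, hc3⟩
    · exact ⟨by omega, hd3⟩
  have hcard : ({a, b, c, d} : Finset ℕ).card = 4 := by
    rw [Finset.card_insert_of_notMem (by simp; omega),
        Finset.card_insert_of_notMem (by simp; omega),
        Finset.card_insert_of_notMem (by simp; omega), Finset.card_singleton]
  calc 4 = ({a, b, c, d} : Finset ℕ).card := hcard.symm
    _ ≤ _ := Finset.card_le_card hsub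

/-- exact 2 for interval indicator -/
lemma crossEqTwo (n : ℕ) (H : ℕ → Bool) (a s : ℕ) (hs : 1 ≤ s) (han : a + s ≤ n)
    (hH : ∀ i ≤ n + 1, (H i = true ↔ a + 1 ≤ i ∧ i ≤ a + s)) :
    ((range (n + 1)).filter (fun t => H t ≠ H (t + 1))).card = 2 := by
  have hfe : (range (n + 1)).filter (fun t => H t ≠ H (t + 1)) = {a, a + s} := by
    ext i
    simp only [mem_filter, mem_range, mem_insert, mem_singleton]
    constructor
    · rintro ⟨hin, hne⟩
      have h1 := hH i (by omega)
      have h2 := hH (i + 1) (by omega)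
      cases hi : H i <;> cases hi2 : H (i + 1) <;> simp_all <;> omega
    · rintro (h | h)
      · have h1 : H a = false := by
          have := hH a (by omega); cases h : H a; rfl; simp [h] at this
        have h2 : H (a + 1) = true := (hH (a + 1) (by omega)).mpr (by omega)
        subst h; exact ⟨by omega, by simp [h1, h2]⟩
      · have h1 : H (a + s) = true := (hH (a + s) (by omega)).mpr (by omega)
        have h2 : H (a + s + 1) = false := by
          have := hH (a + s + 1) (by omega); cases h : H (a + s + 1); rfl
          simp [h] at this
        subst h; exact ⟨by omega, by simp [h1, h2]⟩
  rw [hfe, Finset.card_insert_of_notMem (by simp; omega), Finset.card_singleton]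

lemma keyEquiv {n : ℕ} (H : ℕ → Bool) (π : Equiv.Perm (Fin n)) (Ck : Finset (Fin n))
    (hne : Ck.Nonempty) (h0 : H 0 = false) (hw : H (n + 1) = false)
    (hkey : ∀ j : Fin n, (H ((j : ℕ) + 1) = true ↔ π j ∈ Ck)) :
    2 ≤ ((range (n + 1)).filter (fun t => H t ≠ H (t + 1))).card ∧
    (consecIn π Ck → ((range (n + 1)).filter (fun t => H t ≠ H (t + 1))).card = 2) ∧
    (¬ consecIn π Ck → 4 ≤ ((range (n + 1)).filter (fun t => H t ≠ H (t + 1))).card) := by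
  classical
  have himg : (univ.filter fun j => π j ∈ Ck).image π = Ck := by
    ext c
    simp only [Finset.mem_image, mem_filter, mem_univ, true_and]
    constructor
    · rintro ⟨j, hj, rfl⟩; exact hj
    · intro hc; exact ⟨π.symm c, by simpa using hc, by simp⟩
  have hcardπ : (univ.filter fun j : Fin n => π j ∈ Ck).card = Ck.card := by
    conv_rhs => rw [← himg]
    rw [Finset.card_image_of_injective _ π.injective]
  have hTeq : (range (n + 1)).filter (fun i => H i = true)
      = (univ.filter fun j : Fin n => π j ∈ Ck).image (fun j : Fin n => (j : ℕ) + 1) := by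
    ext i
    simp only [mem_filter, mem_range, Finset.mem_image, mem_univ, true_and]
    constructor
    · rintro ⟨hin, hHi⟩
      have hipos : i ≠ 0 := by rintro rfl; rw [h0] at hHi; exact absurd hHi (by simp)
      have hin' : i ≠ n + 1 := by rintro rfl; rw [hw] at hHi; exact absurd hHi (by simp)
      refine ⟨⟨i - 1, by omega⟩, ?_, by simp only [Fin.val_mk]; omega⟩
      have hk := hkey ⟨i - 1, by omega⟩
      simp only [Fin.val_mk] at hk
      rw [show (i - 1) + 1 = i from by omega] at hk
      exact hk.mp hHi
    · rintro ⟨j, hj, rfl⟩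
      exact ⟨by omega, (hkey j).mpr hj⟩
  have hTcard : ((range (n + 1)).filter (fun i => H i = true)).card = Ck.card := by
    rw [hTeq, Finset.card_image_of_injective _ (fun a b h => Fin.ext (by omega)), hcardπ]
  have hs : 1 ≤ Ck.card := Finset.card_pos.mpr hne
  have hTne : ((range (n + 1)).filter (fun i => H i = true)).Nonempty := by
    rw [← Finset.card_pos, hTcard]; omega
  obtain ⟨i0, hi0⟩ := hTne
  have hi0' := hi0
  simp only [mem_filter, mem_range] at hi0'
  have part1 : 2 ≤ ((range (n + 1)).filter (fun t => H t ≠ H (t + 1))).card := by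
    have hi0n : i0 ≤ n := by
      rcases Nat.lt_or_ge i0 (n + 1) with h | h
      · omega
      · omega
    exact twoLeCross n H h0 hw i0 (by omega) hi0'.2
  refine ⟨part1, ?_, ?_⟩
  · -- consecutive case
    rintro ⟨a, ha⟩
    have hfc : (univ.filter fun j : Fin n => π j ∈ Ck)
        = univ.filter fun j : Fin n => a ≤ (j : ℕ) ∧ (j : ℕ) < a + Ck.card := by
      apply Finset.filter_congr
      intro j _
      exact ha j
    have h3 : (univ.filter fun j : Fin n => a ≤ (j : ℕ) ∧ (j : ℕ) < a + Ck.card).card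
        = ((range n).filter fun i => a ≤ i ∧ i < a + Ck.card).card := by
      rw [Finset.card_filter, Finset.card_filter,
        ← Fin.sum_univ_eq_sum_range (fun i => if a ≤ i ∧ i < a + Ck.card then 1 else 0) n]
    have h4 : ((range n).filter fun i => a ≤ i ∧ i < a + Ck.card) = Finset.Ico a (min (a + Ck.card) n) := by
      ext x; simp only [mem_filter, mem_range, Finset.mem_Ico]; omega
    have h5 : Ck.card = min (a + Ck.card) n - a := by
      conv_lhs => rw [← hcardπ]
      rw [hfc, h3, h4, Nat.card_Ico]
    have han : a + Ck.card ≤ n := by omega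
    have hchar : ∀ i ≤ n + 1, (H i = true ↔ a + 1 ≤ i ∧ i ≤ a + Ck.card) := by
      intro i hi
      rcases Nat.eq_zero_or_pos i with rfl | hip
      · simp [h0]
      rcases Nat.lt_or_ge i (n + 1) with hlt | hge
      · have hk := hkey ⟨i - 1, by omega⟩
        simp only [Fin.val_mk] at hk
        rw [show (i - 1) + 1 = i from by omega] at hk
        rw [hk, ha ⟨i - 1, by omega⟩]
        simp only [Fin.val_mk]
        omega
      · have : i = n + 1 := by omega
        subst this
        simp [hw]; omega
    exact crossEqTwo n H a Ck.card hs han hchar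
  · -- non-consecutive case
    intro hnc
    set T := (range (n + 1)).filter (fun i => H i = true) with hTdef
    have hTne' : T.Nonempty := ⟨i0, hi0⟩
    set i₁ := T.min' hTne' with hi1def
    set i₃ := T.max' hTne' with hi3def
    have hm1 : i₁ ∈ T := Finset.min'_mem T hTne'
    have hm3 : i₃ ∈ T := Finset.max'_mem T hTne'
    simp only [hTdef, mem_filter, mem_range] at hm1 hm3
    have h1pos : 0 < i₁ := by
      rcases Nat.eq_zero_or_pos i₁ with h | h
      · rw [h, h0] at hm1; exact absurd hm1.2 (by simp)
      · exact h
    have h3n : i₃ ≤ n := by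
      rcases Nat.lt_or_ge i₃ (n + 1) with h | h
      · rcases Nat.lt_or_ge i₃ (n + 1) with h' | h' <;> omega
      · have := hm3.1; omega
    have h13 : i₁ ≤ i₃ := Finset.min'_le T i₃ (Finset.max'_mem T hTne')
    by_cases hfill : ∀ i, i₁ ≤ i → i ≤ i₃ → H i = true
    · exfalso
      apply hnc
      have hTicc : T = Finset.Icc i₁ i₃ := by
        ext x
        simp only [hTdef, mem_filter, mem_range, Finset.mem_Icc]
        constructor
        · intro hx
          have hx' : x ∈ T := by simp [hTdef, mem_filter, mem_range]; exact ⟨by omega, hx.2⟩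
          exact ⟨Finset.min'_le T x hx', Finset.le_max' T x hx'⟩
        · intro hx
          exact ⟨by omega, hfill x hx.1 hx.2⟩
      have hs' : Ck.card = i₃ - i₁ + 1 := by
        rw [← hTcard, hTicc, Nat.card_Icc]; omega
      refine ⟨i₁ - 1, fun j => ?_⟩
      rw [← hkey j]
      constructor
      · intro hH'
        have hjT : (j : ℕ) + 1 ∈ T := by
          simp only [hTdef, mem_filter, mem_range]
          exact ⟨by omega, hH'⟩
        have b1 := Finset.min'_le T _ hjT
        have b2 := Finset.le_max' T _ hjT
        omega
      · intro hb
        exact hfill ((j : ℕ) + 1) (by omega) (by omega)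
    · push_neg at hfill
      obtain ⟨i₂, hi2a, hi2b, hi2c⟩ := hfill
      have hi2c' : H i₂ = false := by
        cases h : H i₂
        · rfl
        · exact absurd h hi2c
      have h12 : i₁ < i₂ := by
        rcases Nat.lt_or_ge i₁ i₂ with h | h
        · exact h
        · have : i₁ = i₂ := by omega
          rw [← this, hm1.2] at hi2c'; exact absurd hi2c' (by simp)
      have h23 : i₂ < i₃ := by
        rcases Nat.lt_or_ge i₂ i₃ with h | h
        · exact h
        · have : i₂ = i₃ := by omega
          rw [this, hm3.2] at hi2c'; exact absurd hi2c' (by simp)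
      exact fourLeCross n H h0 hw i₁ i₂ i₃ h12 h23 h3n hm1.2 hi2c' hm3.2
open Fin.NatCast in
theorem stmt11 (m n q : ℕ) (A : Fin m → Fin n → Bool)
    (p : ℕ) (hp : p = ∑ i, (Finset.univ.filter (fun j => A i j = true)).card)
    (C : Fin q → Finset (Fin n)) (hCne : ∀ k, (C k).Nonempty)
    (σ : Equiv.Perm (Fin (n + 1)))
    (k₀ : Fin (n + 1)) (hk : σ k₀ = Fin.last n)
    (π : Equiv.Perm (Fin n))
    (hπ : ∀ j : Fin n, ((σ (k₀ + ((((j : ℕ) + 1 : ℕ)) : Fin (n + 1)))) : ℕ) = (π j : ℕ)) :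
    ((∀ k, consecIn π (C k)) →
        ∑ k : Fin (n + 1), pDist A p q C (σ k) (σ (k + 1)) ≤
          2 * q * (2 * p + 1) + 2 * p) ∧
      ((¬ ∀ k, consecIn π (C k)) →
        2 * (q + 1) * (2 * p + 1) ≤
          ∑ k : Fin (n + 1), pDist A p q C (σ k) (σ (k + 1))) := by
  classical
  -- the indicator sequence for each set
  set Hf : Fin q → ℕ → Bool :=
    fun k i => decide (σ (k₀ + (i : Fin (n + 1))) ∈ (C k).image Fin.castSucc) with hHf
  set Xc : Fin q → ℕ :=
    fun k => ((range (n + 1)).filter (fun i => Hf k i ≠ Hf k (i + 1))).card with hXc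
  -- Step A : splitting the sum
  have hsplit : ∑ t : Fin (n + 1), pDist A p q C (σ t) (σ (t + 1)) =
      (∑ t : Fin (n + 1), colHam (appendZero A) (σ t) (σ (t + 1))) +
        (2 * p + 1) * ∑ k : Fin q, Xc k := by
    unfold pDist
    rw [Finset.sum_add_distrib]
    congr 1
    rw [← Finset.mul_sum]
    congr 1
    rw [Finset.sum_comm]
    apply Finset.sum_congr rfl
    intro k _
    calc
      ∑ t : Fin (n + 1),
            (if (σ t ∈ (C k).image Fin.castSucc ↔ σ (t + 1) ∈ (C k).image Fin.castSucc)
              then 0 else 1)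
          = ∑ t : Fin (n + 1),
            (if (σ (k₀ + t) ∈ (C k).image Fin.castSucc ↔
                  σ (k₀ + t + 1) ∈ (C k).image Fin.castSucc) then 0 else 1) :=
        (Equiv.sum_comp (Equiv.addLeft k₀)
          (fun t => if (σ t ∈ (C k).image Fin.castSucc ↔ σ (t + 1) ∈ (C k).image Fin.castSucc)
            then 0 else 1)).symm
      _ = ∑ t : Fin (n + 1), (if Hf k (t : ℕ) ≠ Hf k ((t : ℕ) + 1) then 1 else 0) := by
        apply Finset.sum_congr rfl
        intro t _
        have ht1 : (((t : ℕ) : Fin (n + 1))) = t := Fin.cast_val_eq_self t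
        have ht2 : ((((t : ℕ) + 1 : ℕ)) : Fin (n + 1)) = t + 1 := by
          rw [Nat.cast_add, Nat.cast_one, Fin.cast_val_eq_self]
        simp only [hHf, ht1, ht2, ← add_assoc]
        by_cases hP : σ (k₀ + t) ∈ (C k).image Fin.castSucc <;>
          by_cases hQ : σ (k₀ + t + 1) ∈ (C k).image Fin.castSucc <;>
          simp [hP, hQ]
      _ = ∑ i ∈ range (n + 1), (if Hf k i ≠ Hf k (i + 1) then 1 else 0) :=
        Fin.sum_univ_eq_sum_range (fun i => if Hf k i ≠ Hf k (i + 1) then 1 else 0) (n + 1)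
      _ = Xc k := (Finset.card_filter _ _).symm
  -- Step B : Hamming part bounded by 2p
  set w : Fin (n + 1) → ℕ :=
    fun c => (univ.filter fun i : Fin m => appendZero A i c = true).card with hwdef
  have hham : ∑ t : Fin (n + 1), colHam (appendZero A) (σ t) (σ (t + 1)) ≤ 2 * p := by
    have hbound : ∀ a b : Fin (n + 1), colHam (appendZero A) a b ≤ w a + w b := by
      intro a b
      show (univ.filter fun i : Fin m =>
        appendZero A i a ≠ appendZero A i b).card ≤ w a + w b
      calc (univ.filter fun i : Fin m => appendZero A i a ≠ appendZero A i b).card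
          ≤ ((univ.filter fun i : Fin m => appendZero A i a = true) ∪
              (univ.filter fun i : Fin m => appendZero A i b = true)).card := by
            apply Finset.card_le_card
            intro i hi
            simp only [mem_filter, mem_univ, true_and] at hi
            simp only [Finset.mem_union, mem_filter, mem_univ, true_and]
            cases h1 : appendZero A i a <;> cases h2 : appendZero A i b <;>
              simp_all
        _ ≤ w a + w b := Finset.card_union_le _ _
    have htot : ∑ c : Fin (n + 1), w c = p := by
      have hcol : ∀ i : Fin m,
          ∑ c : Fin (n + 1), (if appendZero A i c = true then 1 else 0) =
            (univ.filter fun j : Fin n => A i j = true).card := by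
        intro i
        rw [Fin.sum_univ_castSucc]
        have hlast : appendZero A i (Fin.last n) = false := by
          simp [appendZero]
        have hcs : ∀ c : Fin n, appendZero A i (Fin.castSucc c) = A i c := by
          intro c
          simp [appendZero]
        rw [Finset.card_filter]
        simp [hlast, hcs]
      calc ∑ c : Fin (n + 1), w c
          = ∑ c : Fin (n + 1), ∑ i : Fin m, (if appendZero A i c = true then 1 else 0) := by
            apply Finset.sum_congr rfl
            intro c _
            rw [hwdef]
            exact Finset.card_filter _ _
        _ = ∑ i : Fin m, ∑ c : Fin (n + 1), (if appendZero A i c = true then 1 else 0) :=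
            Finset.sum_comm
        _ = ∑ i : Fin m, (univ.filter fun j : Fin n => A i j = true).card := by
            exact Finset.sum_congr rfl fun i _ => hcol i
        _ = p := hp.symm
    calc ∑ t : Fin (n + 1), colHam (appendZero A) (σ t) (σ (t + 1))
        ≤ ∑ t : Fin (n + 1), (w (σ t) + w (σ (t + 1))) :=
          Finset.sum_le_sum fun t _ => hbound _ _
      _ = (∑ t : Fin (n + 1), w (σ t)) + ∑ t : Fin (n + 1), w (σ (t + 1)) :=
          Finset.sum_add_distrib
      _ = (∑ c : Fin (n + 1), w c) + ∑ c : Fin (n + 1), w c := by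
          have h2 : ∑ t : Fin (n + 1), w (σ (t + 1)) = ∑ c : Fin (n + 1), w c := by
            calc ∑ t : Fin (n + 1), w (σ (t + 1))
                = ∑ t : Fin (n + 1), w (((Equiv.addRight (1 : Fin (n + 1))).trans σ) t) := by
                  exact Finset.sum_congr rfl fun t _ => by
                    simp [Equiv.trans_apply, Equiv.coe_addRight]
              _ = ∑ c : Fin (n + 1), w c := Equiv.sum_comp _ w
          rw [Equiv.sum_comp σ w, h2]
      _ = 2 * p := by rw [htot]; ring
  -- Step C : crossing count facts for each k
  have hmain : ∀ k : Fin q, 2 ≤ Xc k ∧ (consecIn π (C k) → Xc k = 2) ∧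
      (¬ consecIn π (C k) → 4 ≤ Xc k) := by
    intro k
    apply keyEquiv (Hf k) π (C k) (hCne k)
    · -- Hf k 0 = false
      show decide (σ (k₀ + ((0 : ℕ) : Fin (n + 1))) ∈ (C k).image Fin.castSucc) = false
      rw [Nat.cast_zero, add_zero, hk, decide_eq_false_iff_not]
      simp only [Finset.mem_image]
      rintro ⟨c, hc, hce⟩
      have := congrArg Fin.val hce
      simp only [Fin.coe_castSucc, Fin.val_last] at this
      omega
    · -- Hf k (n+1) = false
      show decide (σ (k₀ + (((n + 1 : ℕ)) : Fin (n + 1))) ∈ (C k).image Fin.castSucc) = false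
      rw [show (((n + 1 : ℕ)) : Fin (n + 1)) = 0 from Fin.natCast_self (n + 1),
        add_zero, hk, decide_eq_false_iff_not]
      simp only [Finset.mem_image]
      rintro ⟨c, hc, hce⟩
      have := congrArg Fin.val hce
      simp only [Fin.coe_castSucc, Fin.val_last] at this
      omega
    · -- key property
      intro j
      have hv := hπ j
      show decide (σ (k₀ + ((((j : ℕ) + 1 : ℕ)) : Fin (n + 1))) ∈ (C k).image Fin.castSucc)
        = true ↔ π j ∈ C k
      rw [decide_eq_true_eq]
      simp only [Finset.mem_image]
      constructor
      · rintro ⟨c, hc, hce⟩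
        have hcv : c = π j := by
          apply Fin.ext
          have := congrArg Fin.val hce
          simp only [Fin.coe_castSucc] at this
          rw [this, hv]
        exact hcv ▸ hc
      · intro hmem
        refine ⟨π j, hmem, Fin.ext ?_⟩
        simp only [Fin.coe_castSucc]
        rw [hv]
  constructor
  · -- upper bound
    intro hcons
    rw [hsplit]
    have hX : ∑ k : Fin q, Xc k = 2 * q := by
      rw [Finset.sum_congr rfl (fun k _ => (hmain k).2.1 (hcons k)),
        Finset.sum_const, card_univ, Fintype.card_fin, smul_eq_mul]
      ring
    rw [hX]
    calc (∑ t : Fin (n + 1), colHam (appendZero A) (σ t) (σ (t + 1))) + (2 * p + 1) * (2 * q)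
        ≤ 2 * p + (2 * p + 1) * (2 * q) := Nat.add_le_add_right hham _
      _ = 2 * q * (2 * p + 1) + 2 * p := by ring
  · -- lower bound
    intro hnc
    obtain ⟨k', hk'⟩ := not_forall.mp hnc
    rw [hsplit]
    have hS : 2 * q + 2 ≤ ∑ k : Fin q, Xc k := by
      have h1 : ∀ k : Fin q, (if k = k' then 4 else 2) = 2 + (if k = k' then 2 else 0) := by
        intro k; by_cases h : k = k' <;> simp [h]
      calc 2 * q + 2 = ∑ k : Fin q, (if k = k' then 4 else 2) := by
            rw [Finset.sum_congr rfl (fun k _ => h1 k), Finset.sum_add_distrib,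
              Finset.sum_const, Finset.sum_ite_eq' univ k' (fun _ => 2)]
            simp [card_univ]
            ring
        _ ≤ ∑ k : Fin q, Xc k := by
            apply Finset.sum_le_sum
            intro k _
            by_cases h : k = k'
            · subst h
              simpa using (hmain k).2.2 hk'
            · simpa [h] using (hmain k).1
    calc 2 * (q + 1) * (2 * p + 1) = (2 * p + 1) * (2 * q + 2) := by ring
      _ ≤ (2 * p + 1) * ∑ k : Fin q, Xc k := Nat.mul_le_mul_left _ hS
      _ ≤ _ := Nat.le_add_left _ _
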